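/- arXiv:1802.04072 — 7 statements merged into one kernel-verified Lean document; each statement's English description precedes it below -/
import Mathlib

section
/- Let K be a field and let (A₁, R_A), (B₁, R_B), (C₁, R_C) be quadratic data over K. Then the canonical tensor-hom adjunction bijection between K-linear maps A₁ ⊗ B₁ → C₁ and K-linear maps A₁ → B₁* ⊗ C₁ restricts to a bijection between the set of morphisms of quadratic data from the black product (A₁ ⊗ B₁, S₍₂₃₎(R_A ⊗ R_B)) to (C₁, R_C) and the set of morphisms of quadratic data from (A₁, R_A) to the white product (B₁* ⊗ C₁, S₍₂₃₎(R_A(B)^⊥ ⊗ (C₁ ⊗ C₁) + (B₁* ⊗ B₁*) ⊗ R_C)), where R_A(B)^⊥ denotes the annihilator R_B^⊥ of R_B. In other words, Hom_QA(A • B, C) = Hom_QA(A, B^! ∘ C). -/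
open TensorProduct Module

noncomputable section

/-- The image of `R ⊗ S` inside `A ⊗[K] B`, for subspaces `R ⊆ A`, `S ⊆ B`. -/
def subTensor (K : Type) [Field K] {A B : Type} [AddCommMonoid A] [AddCommMonoid B]
    [Module K A] [Module K B] (R : Submodule K A) (S : Submodule K B) :
    Submodule K (A ⊗[K] B) :=
  LinearMap.range (TensorProduct.map R.subtype S.subtype)

/-- The relation space `S₍₂₃₎(R ⊗ S)` of the black product of the quadratic data
`(V, R)` and `(W, S)`. -/
def blackRel (K : Type) [Field K] {V W : Type} [AddCommMonoid V] [AddCommMonoid W]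
    [Module K V] [Module K W] (R : Submodule K (V ⊗[K] V)) (S : Submodule K (W ⊗[K] W)) :
    Submodule K ((V ⊗[K] W) ⊗[K] (V ⊗[K] W)) :=
  Submodule.map (TensorProduct.tensorTensorTensorComm K V V W W).toLinearMap
    (subTensor K R S)

/-- The relation space `S₍₂₃₎(R ⊗ (W ⊗ W) + (V ⊗ V) ⊗ S)` of the white product of the
quadratic data `(V, R)` and `(W, S)`. -/
def whiteRel (K : Type) [Field K] {V W : Type} [AddCommMonoid V] [AddCommMonoid W]
    [Module K V] [Module K W] (R : Submodule K (V ⊗[K] V)) (S : Submodule K (W ⊗[K] W)) :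
    Submodule K ((V ⊗[K] W) ⊗[K] (V ⊗[K] W)) :=
  Submodule.map (TensorProduct.tensorTensorTensorComm K V V W W).toLinearMap
    (subTensor K R (⊤ : Submodule K (W ⊗[K] W)) ⊔ subTensor K (⊤ : Submodule K (V ⊗[K] V)) S)

/-- The annihilator `R^⊥ ⊆ V* ⊗ V*` of a subspace `R ⊆ V ⊗ V`, under the canonical
pairing of `V* ⊗ V*` with `V ⊗ V`. -/
def annRel (K : Type) [Field K] {V : Type} [AddCommMonoid V] [Module K V]
    (R : Submodule K (V ⊗[K] V)) :
    Submodule K (Module.Dual K V ⊗[K] Module.Dual K V) :=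
  Submodule.comap (TensorProduct.dualDistrib K V V) R.dualAnnihilator

/-- `f` is a morphism of quadratic data `(V, R) → (W, S)`:  `(f ⊗ f)(R) ⊆ S`. -/
def IsQuadMor (K : Type) [Field K] {V W : Type} [AddCommMonoid V] [AddCommMonoid W]
    [Module K V] [Module K W] (R : Submodule K (V ⊗[K] V)) (S : Submodule K (W ⊗[K] W))
    (f : V →ₗ[K] W) : Prop :=
  Submodule.map (TensorProduct.map f f) R ≤ S

section Auxiliary

open LinearMap

set_option synthInstance.maxHeartbeats 1000000
set_option maxHeartbeats 1000000
set_option maxRecDepth 8000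

variable {K : Type} [Field K]

lemma aux_mem_map_toLinearMap {M N : Type} [AddCommMonoid M] [AddCommMonoid N]
    [Module K M] [Module K N] (e : M ≃ₗ[K] N) (S : Submodule K M) (x : N) :
    x ∈ S.map e.toLinearMap ↔ e.symm x ∈ S := by
  constructor
  · rintro ⟨y, hy, rfl⟩; simpa using hy
  · intro h; exact ⟨e.symm x, h, by simp⟩

lemma aux_map_subTensor_le_iff {X₁ X₂ Z : Type}
    [AddCommMonoid X₁] [AddCommMonoid X₂] [AddCommMonoid Z]
    [Module K X₁] [Module K X₂] [Module K Z]
    (P : Submodule K X₁) (Q : Submodule K X₂) (T : Submodule K Z)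
    (Φ : (X₁ ⊗[K] X₂) →ₗ[K] Z) :
    Submodule.map Φ (subTensor K P Q) ≤ T ↔
      ∀ p ∈ P, ∀ q ∈ Q, Φ (p ⊗ₜ[K] q) ∈ T := by
  constructor
  · intro h p hp q hq
    exact h ⟨_, ⟨⟨p, hp⟩ ⊗ₜ ⟨q, hq⟩, rfl⟩, rfl⟩
  · rintro h _ ⟨_, ⟨x, rfl⟩, rfl⟩
    induction x using TensorProduct.induction_on with
    | zero => simpa using T.zero_mem
    | tmul p q => simpa using h p p.2 q q.2
    | add x y hx hy => rw [map_add, map_add]; exact T.add_mem hx hy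

lemma aux_subTensor_top_right {X Y : Type} [AddCommMonoid X] [AddCommMonoid Y]
    [Module K X] [Module K Y] (P : Submodule K X) :
    subTensor K P (⊤ : Submodule K Y) = LinearMap.range (P.subtype.rTensor Y) := by
  unfold subTensor
  rw [← rTensor_comp_lTensor, range_comp,
    range_eq_top.mpr (lTensor_surjective (↥P)
      (fun y => ⟨⟨y, Submodule.mem_top⟩, rfl⟩ : Function.Surjective
        (⊤ : Submodule K Y).subtype)),
    Submodule.map_top]

lemma aux_subTensor_top_left {X Y : Type} [AddCommMonoid X] [AddCommMonoid Y]
    [Module K X] [Module K Y] (Q : Submodule K Y) :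
    subTensor K (⊤ : Submodule K X) Q = LinearMap.range (Q.subtype.lTensor X) := by
  unfold subTensor
  rw [← lTensor_comp_rTensor, range_comp,
    range_eq_top.mpr (rTensor_surjective (↥Q)
      (fun y => ⟨⟨y, Submodule.mem_top⟩, rfl⟩ : Function.Surjective
        (⊤ : Submodule K X).subtype)),
    Submodule.map_top]

/-- The kernel characterisation of `P ⊗ Y + X ⊗ Q` for `P` the common kernel of the
functionals on `X` induced by elements of `N`. -/
lemma aux_mem_sup_subTensor_iff {X Y M : Type}
    [AddCommMonoid X] [AddCommMonoid Y] [AddCommMonoid M]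
    [Module K X] [Module K Y] [Module K M]
    (d : X →ₗ[K] Module.Dual K M) (N : Submodule K M) (Q : Submodule K Y)
    [Module.Finite K N] (w : X ⊗[K] Y) :
    w ∈ subTensor K (Submodule.comap d N.dualAnnihilator) (⊤ : Submodule K Y)
        ⊔ subTensor K (⊤ : Submodule K X) Q ↔
      ∀ s ∈ N, (TensorProduct.lid K Y) ((d.flip s).rTensor Y w) ∈ Q := by
  letI : AddCommGroup X := Module.addCommMonoidToAddCommGroup K
  letI : AddCommGroup Y := Module.addCommMonoidToAddCommGroup K
  letI : AddCommGroup M := Module.addCommMonoidToAddCommGroup K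
  set P := Submodule.comap d N.dualAnnihilator with hP
  set dN : X →ₗ[K] Module.Dual K N := N.subtype.dualMap ∘ₗ d with hdN
  have hker : LinearMap.ker dN = P := by
    ext x
    simp only [hdN, mem_ker, coe_comp, Function.comp_apply, hP, Submodule.mem_comap,
      Submodule.mem_dualAnnihilator]
    constructor
    · intro h s hs
      exact congrFun (congrArg DFunLike.coe h) ⟨s, hs⟩
    · intro h
      ext ⟨s, hs⟩
      simpa using h s hs
  set dbar : (X ⧸ P) →ₗ[K] Module.Dual K N := P.liftQ dN hker.ge with hdbar
  have hdbar_inj : Function.Injective dbar :=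
    ker_eq_bot.mp (Submodule.ker_liftQ_eq_bot _ _ _ hker.le)
  set Ξ : ((X ⧸ P) ⊗[K] (Y ⧸ Q)) →ₗ[K] (N →ₗ[K] (Y ⧸ Q)) :=
    (dualTensorHom K N (Y ⧸ Q)) ∘ₗ dbar.rTensor (Y ⧸ Q) with hΞ
  have h1 : Function.Injective (dualTensorHom K (↥N) (Y ⧸ Q)) := by
    intro a b hab
    apply (dualTensorHomEquivOfBasis (N := Y ⧸ Q) (Module.Free.chooseBasis K ↥N)).injective
    rw [dualTensorHomEquivOfBasis_apply, dualTensorHomEquivOfBasis_apply]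
    exact hab
  have hΞ_inj : Function.Injective Ξ := by
    rw [hΞ, coe_comp]
    exact h1.comp
      (Module.Flat.rTensor_preserves_injective_linearMap (M := Y ⧸ Q) dbar hdbar_inj)
  set Θ : (X ⊗[K] Y) →ₗ[K] (N →ₗ[K] (Y ⧸ Q)) :=
    (dualTensorHom K N (Y ⧸ Q)) ∘ₗ dN.rTensor (Y ⧸ Q) ∘ₗ Q.mkQ.lTensor X with hΘ
  have key : Θ = Ξ ∘ₗ TensorProduct.map P.mkQ Q.mkQ := by
    rw [hΘ, hΞ]
    have : dN = dbar ∘ₗ P.mkQ := by ext x; simp [hdbar]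
    rw [this, rTensor_comp]
    rw [comp_assoc, comp_assoc, rTensor_comp_lTensor]
  have hsup : subTensor K P (⊤ : Submodule K Y) ⊔ subTensor K (⊤ : Submodule K X) Q
      = LinearMap.ker Θ := by
    rw [key, ker_comp, ker_eq_bot.mpr hΞ_inj, Submodule.comap_bot]
    rw [TensorProduct.map_ker (LinearMap.exact_subtype_mkQ P) (Submodule.mkQ_surjective P)
      (LinearMap.exact_subtype_mkQ Q) (Submodule.mkQ_surjective Q)]
    rw [aux_subTensor_top_right, aux_subTensor_top_left, sup_comm]
  rw [hsup, mem_ker]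
  have hpoint : ∀ (w : X ⊗[K] Y) (s : N),
      Θ w s = Q.mkQ ((TensorProduct.lid K Y) ((d.flip (s : M)).rTensor Y w)) := by
    intro w s
    induction w using TensorProduct.induction_on with
    | zero => simp
    | tmul x y =>
      simp [hΘ, hdN, TensorProduct.lid_tmul]
    | add x y hx hy => simp only [map_add, LinearMap.add_apply, hx, hy]
  constructor
  · intro h s hs
    have h2 := hpoint w ⟨s, hs⟩
    rw [h, LinearMap.zero_apply, eq_comm, Submodule.mkQ_apply,
      Submodule.Quotient.mk_eq_zero] at h2
    exact h2
  · intro h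
    ext ⟨s, hs⟩
    rw [hpoint]
    simpa [Submodule.Quotient.mk_eq_zero] using h s hs

lemma aux_evalA_core {B C : Type} [AddCommMonoid B] [AddCommMonoid C]
    [Module K B] [Module K C]
    (x y : Module.Dual K B ⊗[K] C) (b₁ b₂ : B) :
    (TensorProduct.lid K (C ⊗[K] C))
        ((((TensorProduct.dualDistrib K B B).flip (b₁ ⊗ₜ[K] b₂)).rTensor (C ⊗[K] C))
          ((TensorProduct.tensorTensorTensorComm K (Module.Dual K B) (Module.Dual K B) C C).symm
            (x ⊗ₜ[K] y)))
      = dualTensorHom K B C x b₁ ⊗ₜ[K] dualTensorHom K B C y b₂ := by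
  induction x using TensorProduct.induction_on with
  | zero => simp
  | tmul φ c =>
    induction y using TensorProduct.induction_on with
    | zero => simp
    | tmul ψ c' =>
      rw [TensorProduct.tensorTensorTensorComm_symm,
        TensorProduct.tensorTensorTensorComm_tmul, LinearMap.rTensor_tmul,
        TensorProduct.lid_tmul, LinearMap.flip_apply, TensorProduct.dualDistrib_apply,
        dualTensorHom_apply, dualTensorHom_apply]
      simp only [← TensorProduct.smul_tmul', TensorProduct.tmul_smul, smul_smul]
      rw [mul_comm]
    | add y₁ y₂ h₁ h₂ =>
      simp only [TensorProduct.tmul_add, map_add, h₁, h₂, LinearMap.add_apply]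
  | add x₁ x₂ h₁ h₂ =>
    simp only [TensorProduct.add_tmul, map_add, h₁, h₂, LinearMap.add_apply]

lemma aux_evalA {A B C : Type} [AddCommMonoid A] [AddCommMonoid B] [AddCommMonoid C]
    [Module K A] [Module K B] [Module K C]
    (f : (A ⊗[K] B) →ₗ[K] C) (g : A →ₗ[K] Module.Dual K B ⊗[K] C)
    (hg : ∀ (a : A) (b : B), dualTensorHom K B C (g a) b = f (a ⊗ₜ[K] b))
    (a : A ⊗[K] A) (s : B ⊗[K] B) :
    (TensorProduct.lid K (C ⊗[K] C))
        ((((TensorProduct.dualDistrib K B B).flip s).rTensor (C ⊗[K] C))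
          ((TensorProduct.tensorTensorTensorComm K (Module.Dual K B) (Module.Dual K B) C C).symm
            ((TensorProduct.map g g) a)))
      = (TensorProduct.map f f)
          ((TensorProduct.tensorTensorTensorComm K A A B B) (a ⊗ₜ[K] s)) := by
  induction s using TensorProduct.induction_on with
  | zero => simp
  | tmul b₁ b₂ =>
    induction a using TensorProduct.induction_on with
    | zero => simp
    | tmul a₁ a₂ =>
      rw [TensorProduct.map_tmul, aux_evalA_core, hg, hg,
        TensorProduct.tensorTensorTensorComm_tmul, TensorProduct.map_tmul]
    | add a₁ a₂ h₁ h₂ =>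
      simp only [map_add, TensorProduct.add_tmul, h₁, h₂]
  | add s₁ s₂ h₁ h₂ =>
    simp only [map_add, TensorProduct.tmul_add, LinearMap.rTensor_add,
      LinearMap.add_apply, h₁, h₂]

end Auxiliary

set_option synthInstance.maxHeartbeats 1000000
set_option maxHeartbeats 1000000
set_option maxRecDepth 8000

/-- Hom_QA(A • B, C) = Hom_QA(A, B^! ∘ C): the tensor-hom adjunction restricts to a
bijection between morphisms of quadratic data out of the black product and morphisms
into the white product `B^! ∘ C`. -/
theorem black_white_internal_hom_adjunction (K : Type) [Field K]
    (A B C : Type) [AddCommGroup A] [AddCommGroup B] [AddCommGroup C] [Module K A] [Module K B] [Module K C] [FiniteDimensional K A] [FiniteDimensional K B] [FiniteDimensional K C]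
    (RA : Submodule K (A ⊗[K] A)) (RB : Submodule K (B ⊗[K] B)) (RC : Submodule K (C ⊗[K] C))
    (f : (A ⊗[K] B) →ₗ[K] C) :
    IsQuadMor K (blackRel K RA RB) RC f ↔
      IsQuadMor K RA (whiteRel K (annRel K RB) RC)
        ((dualTensorHomEquiv K B C).symm.toLinearMap ∘ₗ TensorProduct.curry f) := by
  set g : A →ₗ[K] Module.Dual K B ⊗[K] C :=
    (dualTensorHomEquiv K B C).symm.toLinearMap ∘ₗ TensorProduct.curry f with hgdef
  have hg : ∀ (a : A) (b : B), dualTensorHom K B C (g a) b = f (a ⊗ₜ[K] b) := by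
    intro a b
    rw [hgdef]
    simp only [LinearMap.coe_comp, Function.comp_apply, LinearEquiv.coe_coe,
      dualTensorHomEquiv]
    rw [← LinearEquiv.ofBijective_apply (f := dualTensorHom K B C)
      (hf := (dualTensorHomEquiv K B C).bijective), LinearEquiv.apply_symm_apply]
    simp
  have hL : IsQuadMor K (blackRel K RA RB) RC f ↔
      ∀ r ∈ RA, ∀ s ∈ RB, (TensorProduct.map f f)
        ((TensorProduct.tensorTensorTensorComm K A A B B) (r ⊗ₜ[K] s)) ∈ RC := by
    unfold IsQuadMor blackRel
    rw [← Submodule.map_comp, aux_map_subTensor_le_iff]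
    simp only [LinearMap.coe_comp, Function.comp_apply, LinearEquiv.coe_coe]
  have hR : ∀ r : A ⊗[K] A, ((TensorProduct.map g g) r ∈ whiteRel K (annRel K RB) RC ↔
      ∀ s ∈ RB, (TensorProduct.map f f)
        ((TensorProduct.tensorTensorTensorComm K A A B B) (r ⊗ₜ[K] s)) ∈ RC) := by
    intro r
    unfold whiteRel
    have h0 := aux_mem_map_toLinearMap
      (TensorProduct.tensorTensorTensorComm K (Module.Dual K B) (Module.Dual K B) C C)
      (subTensor K (annRel K RB) (⊤ : Submodule K (C ⊗[K] C))
        ⊔ subTensor K (⊤ : Submodule K (Module.Dual K B ⊗[K] Module.Dual K B)) RC)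
      ((TensorProduct.map g g) r)
    rw [h0, show annRel K RB = Submodule.comap (TensorProduct.dualDistrib K B B)
        RB.dualAnnihilator from rfl,
      aux_mem_sup_subTensor_iff]
    exact forall₂_congr fun s hs => by rw [aux_evalA f g hg]
  rw [hL]
  show _ ↔ IsQuadMor K RA (whiteRel K (annRel K RB) RC) g
  unfold IsQuadMor
  rw [Submodule.map_le_iff_le_comap]
  constructor
  · intro h r hr
    rw [Submodule.mem_comap, hR]
    exact h r hr
  · intro h r hr s hs
    exact (hR r).mp (h hr) s hs

end
end

section
/- Let K be a field and let (V, R), (W, S) be quadratic data over K. Let f : V → W be a K-linear map and let d ∈ V* ⊗ W be the tensor corresponding to f under the canonical isomorphism Hom_K(V, W) ≅ V* ⊗ W (valid since V is finite-dimensional). Then f is a morphism of quadratic data (i.e. (f ⊗ f)(R) ⊆ S) if and only if S₍₂₃₎(d ⊗ d) lies in the subspace R^⊥ ⊗ (W ⊗ W) + (V* ⊗ V*) ⊗ S of (V* ⊗ V*) ⊗ (W ⊗ W). -/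
open TensorProduct Module

noncomputable section

section Aux

open LinearMap

set_option synthInstance.maxHeartbeats 1000000
set_option maxHeartbeats 1000000

variable {K : Type} [Field K]

lemma range_map_le_subTensor {A B A' B' : Type} [AddCommMonoid A] [AddCommMonoid B]
    [AddCommMonoid A'] [AddCommMonoid B'] [Module K A] [Module K B] [Module K A'] [Module K B']
    (F : A →ₗ[K] A') (G : B →ₗ[K] B') {P : Submodule K A'} {Q : Submodule K B'}
    (hF : LinearMap.range F ≤ P) (hG : LinearMap.range G ≤ Q) :
    LinearMap.range (TensorProduct.map F G) ≤ subTensor K P Q := by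
  rintro x ⟨y, rfl⟩
  induction y using TensorProduct.induction_on with
  | zero => simp
  | tmul a b =>
      exact ⟨(⟨F a, hF ⟨a, rfl⟩⟩ : P) ⊗ₜ[K] (⟨G b, hG ⟨b, rfl⟩⟩ : Q), rfl⟩
  | add u v hu hv => rw [map_add]; exact (subTensor K P Q).add_mem hu hv

lemma map_map_subTensor_le {A B A' B' : Type} [AddCommMonoid A] [AddCommMonoid B]
    [AddCommMonoid A'] [AddCommMonoid B'] [Module K A] [Module K B] [Module K A'] [Module K B']
    (F : A →ₗ[K] A') (G : B →ₗ[K] B') (P : Submodule K A) (Q : Submodule K B) :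
    Submodule.map (TensorProduct.map F G) (subTensor K P Q) ≤
      subTensor K (P.map F) (Q.map G) := by
  rintro x ⟨y, ⟨z, rfl⟩, rfl⟩
  have hz : TensorProduct.map F G (TensorProduct.map P.subtype Q.subtype z) =
      TensorProduct.map (F ∘ₗ P.subtype) (G ∘ₗ Q.subtype) z := by
    rw [TensorProduct.map_comp]; rfl
  rw [hz]
  refine range_map_le_subTensor _ _ ?_ ?_ ⟨z, rfl⟩ <;>
    rw [range_comp, Submodule.range_subtype]

lemma map_congr_subTensor {A B A' B' : Type} [AddCommMonoid A] [AddCommMonoid B]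
    [AddCommMonoid A'] [AddCommMonoid B'] [Module K A] [Module K B] [Module K A'] [Module K B']
    (e1 : A ≃ₗ[K] A') (e2 : B ≃ₗ[K] B') (P : Submodule K A) (Q : Submodule K B) :
    Submodule.map (TensorProduct.congr e1 e2).toLinearMap (subTensor K P Q) =
      subTensor K (P.map e1.toLinearMap) (Q.map e2.toLinearMap) := by
  have hcoe : (TensorProduct.congr e1 e2).toLinearMap =
      TensorProduct.map e1.toLinearMap e2.toLinearMap := rfl
  refine le_antisymm (hcoe ▸ map_map_subTensor_le _ _ _ _) ?_
  have h2 := map_map_subTensor_le e1.symm.toLinearMap e2.symm.toLinearMap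
      (P.map e1.toLinearMap) (Q.map e2.toLinearMap)
  have hP : Submodule.map e1.symm.toLinearMap (P.map e1.toLinearMap) = P := by
    rw [← Submodule.map_comp]; simp
  have hQ : Submodule.map e2.symm.toLinearMap (Q.map e2.toLinearMap) = Q := by
    rw [← Submodule.map_comp]; simp
  rw [hP, hQ] at h2
  intro x hx
  refine ⟨TensorProduct.map e1.symm.toLinearMap e2.symm.toLinearMap x, h2 ⟨x, hx, rfl⟩, ?_⟩
  rw [hcoe]
  exact (TensorProduct.congr e1 e2).apply_symm_apply x

lemma dualTensorHom_map_id_comp {U M M' : Type} [AddCommGroup U] [AddCommGroup M]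
    [AddCommGroup M'] [Module K U] [Module K M] [Module K M'] (l : M →ₗ[K] M')
    (t : Dual K U ⊗[K] M) :
    dualTensorHom K U M' (TensorProduct.map LinearMap.id l t) =
      l ∘ₗ dualTensorHom K U M t := by
  induction t using TensorProduct.induction_on with
  | zero => simp
  | tmul φ m => ext u; simp
  | add u v hu hv => simp [map_add, hu, hv, add_comp, comp_add]

lemma dualTensorHom_map_dualMap {U U' M : Type} [AddCommGroup U] [AddCommGroup U']
    [AddCommGroup M] [Module K U] [Module K U'] [Module K M] (q : U' →ₗ[K] U)
    (t : Dual K U ⊗[K] M) :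
    dualTensorHom K U' M (TensorProduct.map (q.dualMap) LinearMap.id t) =
      dualTensorHom K U M t ∘ₗ q := by
  induction t using TensorProduct.induction_on with
  | zero => simp
  | tmul φ m => ext u; simp
  | add u v hu hv => simp [map_add, hu, hv, add_comp, comp_add]

lemma dualTensorHomEquiv_apply' {U M : Type} [AddCommGroup U] [AddCommGroup M]
    [Module K U] [Module K M] [FiniteDimensional K U] (x : Dual K U ⊗[K] M) :
    dualTensorHomEquiv K U M x = dualTensorHom K U M x :=
  rfl

lemma core_lemma {U M : Type} [AddCommGroup U] [AddCommGroup M] [Module K U] [Module K M]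
    [FiniteDimensional K U] (R : Submodule K U) (S : Submodule K M) (g : U →ₗ[K] M) :
    Submodule.map g R ≤ S ↔
      (dualTensorHomEquiv K U M).symm g ∈
        subTensor K R.dualAnnihilator ⊤ ⊔ subTensor K ⊤ S := by
  have hg : dualTensorHom K U M ((dualTensorHomEquiv K U M).symm g) = g := by
    rw [← dualTensorHomEquiv_apply', LinearEquiv.apply_symm_apply]
  constructor
  · intro h
    obtain ⟨q, hq⟩ := exists_isCompl R
    set cR : U →ₗ[K] U := R.subtype ∘ₗ R.projectionOnto q hq with hcR
    set cq : U →ₗ[K] U := q.subtype ∘ₗ q.projectionOnto R hq.symm with hcq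
    have hsum : cR + cq = LinearMap.id := by
      ext x; exact Submodule.projection_add_projection_eq_self hq x
    have hgdecomp : g = g ∘ₗ cq + g ∘ₗ cR := by
      rw [← comp_add, add_comm, hsum, comp_id]
    have hmem2 : (dualTensorHomEquiv K U M).symm (g ∘ₗ cq) ∈
        subTensor K R.dualAnnihilator (⊤ : Submodule K M) := by
      have hc : g ∘ₗ cq = dualTensorHom K U M
          (TensorProduct.map (cq.dualMap) LinearMap.id ((dualTensorHomEquiv K U M).symm g)) := by
        rw [dualTensorHom_map_dualMap, hg]
      rw [hc, ← dualTensorHomEquiv_apply', LinearEquiv.symm_apply_apply]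
      refine range_map_le_subTensor _ _ ?_ le_top ⟨_, rfl⟩
      rintro φ ⟨ψ, rfl⟩
      rw [Submodule.mem_dualAnnihilator]
      intro r hr
      have hcr : cq r = 0 := by
        simp [hcq, Submodule.projectionOnto_apply_of_mem_right hq.symm hr]
      simp [dualMap_apply, hcr]
    have hSmem : ∀ x : U, (g ∘ₗ cR) x ∈ S := by
      intro x
      exact h ⟨cR x, by simp [hcR], rfl⟩
    set m : U →ₗ[K] S := codRestrict S (g ∘ₗ cR) hSmem with hm
    have hmem1 : (dualTensorHomEquiv K U M).symm (g ∘ₗ cR) ∈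
        subTensor K (⊤ : Submodule K (Dual K U)) S := by
      have hc : g ∘ₗ cR = dualTensorHom K U M
          (TensorProduct.map LinearMap.id S.subtype ((dualTensorHomEquiv K U S).symm m)) := by
        rw [dualTensorHom_map_id_comp]
        rw [← dualTensorHomEquiv_apply', LinearEquiv.apply_symm_apply]
        ext x; simp [hm]
      rw [hc, ← dualTensorHomEquiv_apply', LinearEquiv.symm_apply_apply]
      exact range_map_le_subTensor _ _ le_top (le_of_eq (Submodule.range_subtype S)) ⟨_, rfl⟩
    rw [hgdecomp, map_add]
    exact Submodule.add_mem_sup hmem2 hmem1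
  · intro h
    have claim1 : ∀ a ∈ subTensor K R.dualAnnihilator (⊤ : Submodule K M),
        ∀ u ∈ R, dualTensorHom K U M a u = 0 := by
      rintro _ ⟨y, rfl⟩ u hu
      induction y using TensorProduct.induction_on with
      | zero => simp
      | tmul φ n =>
          have h0 : (φ : Dual K U) u = 0 := (Submodule.mem_dualAnnihilator _).mp φ.2 u hu
          simp [h0]
      | add s t hs ht => rw [map_add, map_add, LinearMap.add_apply, hs, ht, add_zero]
    have claim2 : ∀ b ∈ subTensor K (⊤ : Submodule K (Dual K U)) S,
        ∀ u : U, dualTensorHom K U M b u ∈ S := by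
      rintro _ ⟨y, rfl⟩ u
      induction y using TensorProduct.induction_on with
      | zero => simp
      | tmul φ n => simpa using S.smul_mem _ n.2
      | add s t hs ht => rw [map_add, map_add, LinearMap.add_apply]; exact S.add_mem hs ht
    obtain ⟨a, ha, b, hb, hab⟩ := Submodule.mem_sup.mp h
    rintro x ⟨u, hu, rfl⟩
    have hgab : g = dualTensorHom K U M a + dualTensorHom K U M b := by
      rw [← map_add, hab, hg]
    rw [hgab, LinearMap.add_apply, claim1 a ha u hu, zero_add]
    exact claim2 b hb u

lemma lemE {V W : Type} [AddCommGroup V] [AddCommGroup W] [Module K V] [Module K W]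
    (d d' : Dual K V ⊗[K] W) :
    dualTensorHom K (V ⊗[K] V) (W ⊗[K] W)
        (TensorProduct.map (dualDistrib K V V) LinearMap.id
          (tensorTensorTensorComm K (Dual K V) W (Dual K V) W (d ⊗ₜ[K] d'))) =
      TensorProduct.map (dualTensorHom K V W d) (dualTensorHom K V W d') := by
  induction d using TensorProduct.induction_on with
  | zero => simp [zero_tmul, TensorProduct.map_zero_left]
  | tmul φ w =>
      induction d' using TensorProduct.induction_on with
      | zero => simp [tmul_zero, TensorProduct.map_zero_right]
      | tmul ψ w' =>
          rw [tensorTensorTensorComm_tmul, map_tmul, map_dualTensorHom]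
          simp
      | add s t hs ht =>
          rw [tmul_add, map_add, map_add, map_add, hs, ht,
            map_add (dualTensorHom K V W) s t, TensorProduct.map_add_right]
  | add s t hs ht =>
      rw [add_tmul, map_add, map_add, map_add, hs, ht,
        map_add (dualTensorHom K V W) s t, TensorProduct.map_add_left]

end Aux

set_option synthInstance.maxHeartbeats 1000000
set_option maxHeartbeats 1000000

/-- `f : (V,R) → (W,S)` is a morphism of quadratic data iff the corresponding tensor
`d ∈ V* ⊗ W` satisfies `S₍₂₃₎(d ⊗ d) ∈ R^⊥ ⊗ (W ⊗ W) + (V* ⊗ V*) ⊗ S`. -/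
theorem quadMor_iff_tensor_relation (K : Type) [Field K]
    (V W : Type) [AddCommGroup V] [AddCommGroup W] [Module K V] [Module K W] [FiniteDimensional K V] [FiniteDimensional K W]
    (R : Submodule K (V ⊗[K] V)) (S : Submodule K (W ⊗[K] W))
    (f : V →ₗ[K] W) (d : Module.Dual K V ⊗[K] W)
    (hd : dualTensorHomEquiv K V W d = f) :
    IsQuadMor K R S f ↔
      TensorProduct.tensorTensorTensorComm K (Module.Dual K V) W (Module.Dual K V) W
          (d ⊗ₜ[K] d) ∈
        subTensor K (annRel K R) (⊤ : Submodule K (W ⊗[K] W)) ⊔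
          subTensor K (⊤ : Submodule K (Module.Dual K V ⊗[K] Module.Dual K V)) S := by
  set e := dualTensorHomEquiv K (V ⊗[K] V) (W ⊗[K] W) with he
  set Ψ : (Dual K V ⊗[K] Dual K V) ⊗[K] (W ⊗[K] W) ≃ₗ[K] Dual K (V ⊗[K] V) ⊗[K] (W ⊗[K] W) :=
    TensorProduct.congr (dualDistribEquiv K V V) (LinearEquiv.refl K (W ⊗[K] W)) with hΨ
  set t0 := tensorTensorTensorComm K (Dual K V) W (Dual K V) W (d ⊗ₜ[K] d) with ht0
  have hΨcoe : Ψ.toLinearMap =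
      TensorProduct.map (dualDistrib K V V) LinearMap.id := rfl
  -- key claim 1: Ψ t0 = e.symm (map f f)
  have hfd : dualTensorHom K V W d = f := by rw [← hd, dualTensorHomEquiv_apply']
  have hΨt0 : Ψ t0 = e.symm (TensorProduct.map f f) := by
    apply e.injective
    rw [LinearEquiv.apply_symm_apply, he, dualTensorHomEquiv_apply']
    have : Ψ t0 = TensorProduct.map (dualDistrib K V V) LinearMap.id t0 := by
      rw [← hΨcoe]; rfl
    rw [this, ht0, lemE, hfd]
  -- key claim 2: submodule transport
  have hmapann : Submodule.map (dualDistribEquiv K V V).toLinearMap (annRel K R) =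
      R.dualAnnihilator := by
    have : (dualDistribEquiv K V V).toLinearMap = dualDistrib K V V := rfl
    rw [this]
    exact Submodule.map_comap_eq_of_surjective
      (dualDistribEquiv K V V).surjective R.dualAnnihilator
  have hmaptopW : Submodule.map (LinearEquiv.refl K (W ⊗[K] W)).toLinearMap
      (⊤ : Submodule K (W ⊗[K] W)) = ⊤ := by simp
  have hmaptopD : Submodule.map (dualDistribEquiv K V V).toLinearMap
      (⊤ : Submodule K (Dual K V ⊗[K] Dual K V)) = ⊤ := by
    rw [Submodule.map_top, LinearEquiv.range]
  have hmapS : Submodule.map (LinearEquiv.refl K (W ⊗[K] W)).toLinearMap S = S := by simp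
  have hsub : Submodule.map Ψ.toLinearMap
      (subTensor K (annRel K R) (⊤ : Submodule K (W ⊗[K] W)) ⊔
        subTensor K (⊤ : Submodule K (Dual K V ⊗[K] Dual K V)) S) =
      subTensor K R.dualAnnihilator ⊤ ⊔ subTensor K ⊤ S := by
    rw [Submodule.map_sup, hΨ, map_congr_subTensor, map_congr_subTensor,
      hmapann, hmaptopW, hmaptopD, hmapS]
  have hmem : t0 ∈ subTensor K (annRel K R) (⊤ : Submodule K (W ⊗[K] W)) ⊔
      subTensor K (⊤ : Submodule K (Dual K V ⊗[K] Dual K V)) S ↔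
      Ψ t0 ∈ subTensor K R.dualAnnihilator ⊤ ⊔ subTensor K ⊤ S := by
    rw [← hsub]
    constructor
    · intro h; exact ⟨t0, h, rfl⟩
    · rintro ⟨y, hy, hxy⟩
      have : y = t0 := Ψ.injective hxy
      rwa [this] at hy
  rw [IsQuadMor, core_lemma R S (TensorProduct.map f f), ← he, ← hΨt0, ← hmem, ht0]
end
end

section
/- Let K be a field and let (V, R) be a quadratic datum over K. Let d ∈ V* ⊗ V be the coevaluation element, i.e. the tensor corresponding to the identity map of V under the canonical isomorphism Hom_K(V, V) ≅ V* ⊗ V. Then S₍₂₃₎(d ⊗ d) lies in the subspace R^⊥ ⊗ (V ⊗ V) + (V* ⊗ V*) ⊗ R of (V* ⊗ V*) ⊗ (V ⊗ V). (This element is the Kelly identity element j : K[t]/(t²) → V^! ∘ V of the QA-enrichment.) -/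
open TensorProduct Module

noncomputable section

set_option maxHeartbeats 1000000
set_option synthInstance.maxHeartbeats 400000
section Aux
open LinearMap
variable {K : Type} [Field K] {M N P Q : Type} [AddCommGroup M] [AddCommGroup N]
  [AddCommGroup P] [AddCommGroup Q] [Module K M] [Module K N] [Module K P] [Module K Q]

lemma dth_comp_right (f : M →ₗ[K] N) (w : Module.Dual K N ⊗[K] P) :
    dualTensorHom K M P (TensorProduct.map f.dualMap LinearMap.id w) =
      (dualTensorHom K N P w).comp f := by
  induction w using TensorProduct.induction_on with
  | zero => simp
  | tmul g p => ext x; simp [dualTensorHom_apply]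
  | add a b ha hb => simp only [map_add, ha, hb, add_comp]

lemma dth_comp_left (g : P →ₗ[K] Q) (w : Module.Dual K M ⊗[K] P) :
    dualTensorHom K M Q (TensorProduct.map LinearMap.id g w) =
      g.comp (dualTensorHom K M P w) := by
  induction w using TensorProduct.induction_on with
  | zero => simp
  | tmul f p => ext x; simp [dualTensorHom_apply]
  | add a b ha hb => simp only [map_add, ha, hb, comp_add]

lemma dde_apply [Module.Finite K M] [Module.Free K M] [Module.Finite K N] [Module.Free K N]
    (x : Module.Dual K M ⊗[K] Module.Dual K N) :
    TensorProduct.dualDistribEquiv K M N x = TensorProduct.dualDistrib K M N x := by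
  simp [TensorProduct.dualDistribEquiv, TensorProduct.dualDistribEquivOfBasis]

lemma ttt_key {V : Type} [AddCommGroup V] [Module K V] (a b : Module.Dual K V ⊗[K] V) :
    dualTensorHom K (V ⊗[K] V) (V ⊗[K] V)
      (TensorProduct.map (TensorProduct.dualDistrib K V V) LinearMap.id
        (TensorProduct.tensorTensorTensorComm K (Module.Dual K V) V (Module.Dual K V) V
          (a ⊗ₜ[K] b))) =
      TensorProduct.map (dualTensorHom K V V a) (dualTensorHom K V V b) := by
  induction a using TensorProduct.induction_on with
  | zero => simp
  | add a a' ha ha' =>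
      simp only [add_tmul, map_add, ha, ha', TensorProduct.map_add_left]
  | tmul f v =>
      induction b using TensorProduct.induction_on with
      | zero => simp
      | add b b' hb hb' =>
          simp only [tmul_add, map_add, hb, hb', TensorProduct.map_add_right]
      | tmul g w =>
          simp only [TensorProduct.tensorTensorTensorComm_tmul, TensorProduct.map_tmul,
            LinearMap.id_apply, map_dualTensorHom]

lemma mem_subTensor {A B C D : Type} [AddCommGroup A] [AddCommGroup B] [AddCommGroup C]
    [AddCommGroup D] [Module K A] [Module K B] [Module K C] [Module K D]
    (S₁ : Submodule K A) (S₂ : Submodule K B) (f : C →ₗ[K] A) (g : D →ₗ[K] B)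
    (hf : ∀ x, f x ∈ S₁) (hg : ∀ y, g y ∈ S₂) (w : C ⊗[K] D) :
    TensorProduct.map f g w ∈ subTensor K S₁ S₂ := by
  have hcomp : TensorProduct.map f g = (TensorProduct.map S₁.subtype S₂.subtype).comp
      (TensorProduct.map (f.codRestrict S₁ hf) (g.codRestrict S₂ hg)) := by
    rw [← TensorProduct.map_comp]; rfl
  rw [hcomp]
  exact ⟨_, rfl⟩

end Aux

/-- Kelly's identity element. -/
theorem coevaluation_mem_white_relation (K : Type) [Field K]
    (V : Type) [AddCommGroup V] [Module K V] [FiniteDimensional K V]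
    (R : Submodule K (V ⊗[K] V)) (d : Module.Dual K V ⊗[K] V)
    (hd : dualTensorHomEquiv K V V d = LinearMap.id) :
    TensorProduct.tensorTensorTensorComm K (Module.Dual K V) V (Module.Dual K V) V
        (d ⊗ₜ[K] d) ∈
      subTensor K (annRel K R) (⊤ : Submodule K (V ⊗[K] V)) ⊔
        subTensor K (⊤ : Submodule K (Module.Dual K V ⊗[K] Module.Dual K V)) R := by
  classical
  set De : Module.Dual K V ⊗[K] Module.Dual K V ≃ₗ[K] Module.Dual K (V ⊗[K] V) :=
    TensorProduct.dualDistribEquiv K V V with hDe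
  set Φ : (Module.Dual K V ⊗[K] Module.Dual K V) ⊗[K] (V ⊗[K] V) ≃ₗ[K] ((V ⊗[K] V) →ₗ[K] (V ⊗[K] V)) :=
    (TensorProduct.congr De (LinearEquiv.refl K (V ⊗[K] V))).trans (dualTensorHomEquiv K (V ⊗[K] V) (V ⊗[K] V)) with hΦ
  have hΦapp : ∀ z, Φ z = dualTensorHom K (V ⊗[K] V) (V ⊗[K] V)
      (TensorProduct.map (TensorProduct.dualDistrib K V V) LinearMap.id z) := by
    intro z
    have h1 : (TensorProduct.congr De (LinearEquiv.refl K (V ⊗[K] V))) z =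
        TensorProduct.map De.toLinearMap LinearMap.id z := by
      simp [TensorProduct.congr, LinearEquiv.refl]
    have h2 : De.toLinearMap = TensorProduct.dualDistrib K V V := by
      exact LinearMap.ext fun x => dde_apply x
    simp [hΦ, h1, h2, dualTensorHomEquiv, dualTensorHomEquivOfBasis_apply]
  set e := TensorProduct.tensorTensorTensorComm K (Module.Dual K V) V (Module.Dual K V) V
      (d ⊗ₜ[K] d) with he
  -- Φ e = id
  have hdd : dualTensorHom K V V d = LinearMap.id := by
    rw [← hd, dualTensorHomEquiv, LinearEquiv.ofBijective_apply]
  have hΦe : Φ e = LinearMap.id := by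
    rw [hΦapp, he, ttt_key, hdd, TensorProduct.map_id]
  -- the projection
  obtain ⟨q, hq⟩ := Submodule.exists_isCompl R
  set π : (V ⊗[K] V) →ₗ[K] R := Submodule.projectionOnto R q hq with hπ
  set p : (V ⊗[K] V) →ₗ[K] (V ⊗[K] V) := R.subtype ∘ₗ π with hp
  -- part 2 : Φ.symm p ∈ subTensor ⊤ R
  have hDeD : ∀ x, TensorProduct.dualDistrib K V V (De.symm x) = x := by
    intro x; rw [← dde_apply (De.symm x)]; exact De.apply_symm_apply x
  have part2 : Φ.symm p ∈ subTensor K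
      (⊤ : Submodule K (Module.Dual K V ⊗[K] Module.Dual K V)) R := by
    set w' : Module.Dual K (V ⊗[K] V) ⊗[K] R := (dualTensorHomEquiv K (V ⊗[K] V) R).symm π with hw'
    have hψ : dualTensorHom K (V ⊗[K] V) R w' = π :=
      (dualTensorHomEquiv K (V ⊗[K] V) R).apply_symm_apply π
    set wR := TensorProduct.map De.symm.toLinearMap R.subtype w' with hwR
    have hΦwR : Φ wR = p := by
      rw [hΦapp, hwR]
      have h3 : (TensorProduct.dualDistrib K V V).comp De.symm.toLinearMap =
          LinearMap.id := LinearMap.ext fun x => hDeD x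
      have h5 : TensorProduct.map (TensorProduct.dualDistrib K V V) LinearMap.id
            (TensorProduct.map De.symm.toLinearMap R.subtype w') =
          TensorProduct.map ((TensorProduct.dualDistrib K V V).comp De.symm.toLinearMap)
            (LinearMap.id.comp R.subtype) w' := by
        rw [TensorProduct.map_comp]; rfl
      rw [h5, h3, LinearMap.id_comp, dth_comp_left, hψ]
    have : Φ.symm p = wR := by rw [← hΦwR, Φ.symm_apply_apply]
    rw [this, hwR]
    have hcomp : TensorProduct.map De.symm.toLinearMap R.subtype =
        (TensorProduct.map (⊤ : Submodule K (Dual K V ⊗[K] Dual K V)).subtype R.subtype).comp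
        (TensorProduct.map (De.symm.toLinearMap.codRestrict ⊤ fun _ => Submodule.mem_top)
          (LinearMap.id (M := R))) := by
      rw [← TensorProduct.map_comp]; rfl
    rw [hcomp]
    exact ⟨_, rfl⟩
  -- part 1 : Φ.symm (id - p) ∈ subTensor (annRel R) ⊤
  have part1 : Φ.symm (LinearMap.id - p) ∈ subTensor K (annRel K R)
      (⊤ : Submodule K (V ⊗[K] V)) := by
    have hker : R ≤ LinearMap.ker (LinearMap.id - p) := by
      intro r hr
      simp only [LinearMap.mem_ker, LinearMap.sub_apply, LinearMap.id_apply, hp, LinearMap.coe_comp, Function.comp_apply, hπ,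
        Submodule.coe_subtype]
      rw [Submodule.projectionOnto_apply_left hq ⟨r, hr⟩]
      exact sub_self r
    set ψ : ((V ⊗[K] V) ⧸ R) →ₗ[K] (V ⊗[K] V) := R.liftQ (LinearMap.id - p) hker with hψdef
    have hfact : ψ.comp R.mkQ = LinearMap.id - p := R.liftQ_mkQ _ _
    set w' : Module.Dual K ((V ⊗[K] V) ⧸ R) ⊗[K] (V ⊗[K] V) := (dualTensorHomEquiv K ((V ⊗[K] V) ⧸ R) (V ⊗[K] V)).symm ψ with hw'
    have hψ : dualTensorHom K ((V ⊗[K] V) ⧸ R) (V ⊗[K] V) w' = ψ :=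
      (dualTensorHomEquiv K ((V ⊗[K] V) ⧸ R) (V ⊗[K] V)).apply_symm_apply ψ
    set F : Module.Dual K ((V ⊗[K] V) ⧸ R) →ₗ[K] (Module.Dual K V ⊗[K] Module.Dual K V) :=
      De.symm.toLinearMap.comp R.mkQ.dualMap with hF
    set w1 := TensorProduct.map F LinearMap.id w' with hw1
    have hΦw1 : Φ w1 = LinearMap.id - p := by
      rw [hΦapp, hw1]
      have h3 : (TensorProduct.dualDistrib K V V).comp F = R.mkQ.dualMap := by
        refine LinearMap.ext fun x => ?_
        simp [hF, hDeD]
      have h5 : TensorProduct.map (TensorProduct.dualDistrib K V V) LinearMap.id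
            (TensorProduct.map F LinearMap.id w') =
          TensorProduct.map ((TensorProduct.dualDistrib K V V).comp F)
            ((LinearMap.id : (V ⊗[K] V) →ₗ[K] (V ⊗[K] V)).comp LinearMap.id) w' := by
        rw [TensorProduct.map_comp]; rfl
      rw [h5, h3, LinearMap.id_comp, dth_comp_right, hψ, hfact]
    have hmemF : ∀ x, F x ∈ annRel K R := by
      intro x
      simp only [annRel, Submodule.mem_comap, hF, LinearMap.coe_comp, Function.comp_apply, hDeD]
      rw [Submodule.mem_dualAnnihilator]
      intro r hr
      simp [hDeD, LinearMap.dualMap_apply, Submodule.mkQ_apply, (Submodule.Quotient.mk_eq_zero R).2 hr]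
    have : Φ.symm (LinearMap.id - p) = w1 := by rw [← hΦw1, Φ.symm_apply_apply]
    rw [this, hw1]
    have hcomp : TensorProduct.map F (LinearMap.id (M := V ⊗[K] V)) =
        (TensorProduct.map (annRel K R).subtype
            (⊤ : Submodule K (V ⊗[K] V)).subtype).comp
        (TensorProduct.map (F.codRestrict (annRel K R) hmemF)
          ((LinearMap.id (M := V ⊗[K] V)).codRestrict ⊤ fun _ => Submodule.mem_top)) := by
      rw [← TensorProduct.map_comp]; rfl
    rw [hcomp]
    exact ⟨_, rfl⟩
  -- assemble
  have : e = Φ.symm (LinearMap.id - p) + Φ.symm p := by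
    rw [← map_add, sub_add_cancel, ← hΦe, Φ.symm_apply_apply]
  rw [this]
  exact Submodule.add_mem_sup part1 part2

end
end

section
/- Let K be a field and let (V, R), (W, S) be quadratic data over K. Let T = S₍₂₃₎(R^⊥ ⊗ (W ⊗ W) + (V* ⊗ V*) ⊗ S) ⊆ (V* ⊗ W) ⊗ (V* ⊗ W) be the relation space of the white product (V*, R^⊥) ∘ (W, S), and let ev : (V* ⊗ W) ⊗ V → W be the evaluation map (ξ ⊗ w) ⊗ v ↦ ξ(v)·w. Then ev is a morphism of quadratic data from the black product ((V* ⊗ W) ⊗ V, S₍₂₃₎(T ⊗ R)) to (W, S); that is, (ev ⊗ ev)(S₍₂₃₎(T ⊗ R)) ⊆ S. (This is the counit e : [B,C] • B → C of the internal hom adjunction in (QA, •).) -/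
open TensorProduct Module

noncomputable section

set_option synthInstance.maxHeartbeats 400000 in
lemma evaluation_key (K : Type) [Field K]
    (V W : Type) [AddCommGroup V] [AddCommGroup W] [Module K V] [Module K W]
    (ev : ((Module.Dual K V ⊗[K] W) ⊗[K] V) →ₗ[K] W)
    (hev : ∀ (ξ : Module.Dual K V) (w : W) (v : V), ev ((ξ ⊗ₜ[K] w) ⊗ₜ[K] v) = ξ v • w)
    (ρ : Module.Dual K V ⊗[K] Module.Dual K V) (q : W ⊗[K] W) (r : V ⊗[K] V) :
    TensorProduct.map ev ev
      ((TensorProduct.tensorTensorTensorComm K (Module.Dual K V ⊗[K] W)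
          (Module.Dual K V ⊗[K] W) V V)
        (((TensorProduct.tensorTensorTensorComm K (Module.Dual K V) (Module.Dual K V) W W)
            (ρ ⊗ₜ[K] q)) ⊗ₜ[K] r))
    = TensorProduct.dualDistrib K V V ρ r • q := by
  induction ρ using TensorProduct.induction_on with
  | zero => simp
  | add a b ha hb =>
      simp only [add_tmul, map_add, LinearMap.add_apply, ha, hb, add_smul]
  | tmul ξ₁ ξ₂ =>
    induction q using TensorProduct.induction_on with
    | zero => simp
    | add a b ha hb =>
        simp only [tmul_add, add_tmul, map_add, ha, hb, smul_add]
    | tmul w₁ w₂ =>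
      induction r using TensorProduct.induction_on with
      | zero => simp
      | add a b ha hb =>
          simp only [tmul_add, map_add, ha, hb, add_smul]
      | tmul v₁ v₂ =>
        simp only [TensorProduct.tensorTensorTensorComm_tmul, TensorProduct.map_tmul,
          hev, TensorProduct.dualDistrib_apply]
        rw [smul_tmul', tmul_smul, smul_tmul', smul_smul, mul_comm]

/-- The evaluation map `ev : ((V* ⊗ W) ⊗ V) → W` is a morphism of quadratic data from
the black product `((V*,R^⊥) ∘ (W,S)) • (V,R)` to `(W,S)`: the counit
`e : [B,C] • B → C` of the internal hom adjunction in `(QA, •)`. -/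
theorem evaluation_isQuadMor (K : Type) [Field K]
    (V W : Type) [AddCommGroup V] [AddCommGroup W] [Module K V] [Module K W] [FiniteDimensional K V] [FiniteDimensional K W]
    (R : Submodule K (V ⊗[K] V)) (S : Submodule K (W ⊗[K] W))
    (ev : ((Module.Dual K V ⊗[K] W) ⊗[K] V) →ₗ[K] W)
    (hev : ∀ (ξ : Module.Dual K V) (w : W) (v : V), ev ((ξ ⊗ₜ[K] w) ⊗ₜ[K] v) = ξ v • w) :
    IsQuadMor K (blackRel K (whiteRel K (annRel K R) S) R) S ev := by
  rintro x ⟨y, ⟨z, ⟨p, rfl⟩, rfl⟩, rfl⟩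
  induction p using TensorProduct.induction_on with
  | zero => set_option synthInstance.maxHeartbeats 1000000 in simpa using S.zero_mem
  | add a b ha hb => simpa only [map_add] using S.add_mem ha hb
  | tmul t r =>
    obtain ⟨t, ht⟩ := t
    obtain ⟨r, hr⟩ := r
    simp only [TensorProduct.map_tmul, Submodule.coe_subtype]
    obtain ⟨u, hu, rfl⟩ := ht
    obtain ⟨u₁, h1, u₂, h2, rfl⟩ := Submodule.mem_sup.mp hu
    clear hu
    simp only [map_add, add_tmul]
    refine S.add_mem ?_ ?_
    · obtain ⟨p₁, rfl⟩ := h1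
      clear h2
      induction p₁ using TensorProduct.induction_on with
      | zero => set_option synthInstance.maxHeartbeats 1000000 in simpa using S.zero_mem
      | add a b ha hb => simpa only [map_add, add_tmul] using S.add_mem ha hb
      | tmul ρ q =>
        obtain ⟨ρ, hρ⟩ := ρ
        obtain ⟨q, hq⟩ := q
        simp only [TensorProduct.map_tmul, Submodule.coe_subtype, LinearEquiv.coe_coe]
        rw [evaluation_key K V W ev hev]
        rw [(Submodule.mem_dualAnnihilator _).mp (Submodule.mem_comap.mp hρ) r hr, zero_smul]
        exact S.zero_mem
    · obtain ⟨p₂, rfl⟩ := h2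
      clear h1
      induction p₂ using TensorProduct.induction_on with
      | zero => set_option synthInstance.maxHeartbeats 1000000 in simpa using S.zero_mem
      | add a b ha hb => simpa only [map_add, add_tmul] using S.add_mem ha hb
      | tmul ρ q =>
        obtain ⟨ρ, hρ⟩ := ρ
        obtain ⟨q, hq⟩ := q
        simp only [TensorProduct.map_tmul, Submodule.coe_subtype, LinearEquiv.coe_coe]
        rw [evaluation_key K V W ev hev]
        exact S.smul_mem _ hq

end
end

section
/- Let K be a field and let (U, R_U), (V, R_V), (W, R_W) be quadratic data over K. Let T₁ = S₍₂₃₎(R_U^⊥ ⊗ (V ⊗ V) + (U* ⊗ U*) ⊗ R_V) be the relation space of (U*, R_U^⊥) ∘ (V, R_V), let T₂ = S₍₂₃₎(R_V^⊥ ⊗ (W ⊗ W) + (V* ⊗ V*) ⊗ R_W) be the relation space of (V*, R_V^⊥) ∘ (W, R_W), and let T₃ = S₍₂₃₎(R_U^⊥ ⊗ (W ⊗ W) + (U* ⊗ U*) ⊗ R_W) be the relation space of (U*, R_U^⊥) ∘ (W, R_W). Let μ : (U* ⊗ V) ⊗ (V* ⊗ W) → U* ⊗ W be the linear map (ξ ⊗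 v) ⊗ (η ⊗ w) ↦ η(v)·(ξ ⊗ w). Then μ is a morphism of quadratic data from the black product ((U* ⊗ V) ⊗ (V* ⊗ W), S₍₂₃₎(T₁ ⊗ T₂)) to (U* ⊗ W, T₃); that is, (μ ⊗ μ)(S₍₂₃₎(T₁ ⊗ T₂)) ⊆ T₃. (This is the composition law M of the QA-enrichment of the category of quadratic algebras.) -/
open TensorProduct Module

noncomputable section

section Aux
variable {K : Type} [Field K] {A X Y B : Type}
  [AddCommMonoid A] [AddCommMonoid X] [AddCommMonoid Y] [AddCommMonoid B]
  [Module K A] [Module K X] [Module K Y] [Module K B]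

lemma tmul_mem_subTensor {P : Submodule K A} {Q : Submodule K B}
    {p : A} {q : B} (hp : p ∈ P) (hq : q ∈ Q) : p ⊗ₜ[K] q ∈ subTensor K P Q :=
  ⟨⟨p, hp⟩ ⊗ₜ ⟨q, hq⟩, rfl⟩

lemma subTensor_apply_mem {C : Type} [AddCommMonoid C] [Module K C]
    {P : Submodule K A} {Q : Submodule K B} (F : A ⊗[K] B →ₗ[K] C) {T : Submodule K C}
    (h : ∀ p ∈ P, ∀ q ∈ Q, F (p ⊗ₜ[K] q) ∈ T) :
    ∀ z ∈ subTensor K P Q, F z ∈ T := by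
  rintro _ ⟨z, rfl⟩
  induction z using TensorProduct.induction_on with
  | zero => simp only [map_zero]; exact zero_mem T
  | tmul p q => simpa using h p.1 p.2 q.1 q.2
  | add x y hx hy => rw [map_add, map_add]; exact add_mem hx hy

/-- Contraction of the two middle tensor factors along a pairing `e`. -/
def midContract (e : X →ₗ[K] Y →ₗ[K] K) :
    (A ⊗[K] X) ⊗[K] (Y ⊗[K] B) →ₗ[K] A ⊗[K] B :=
  (TensorProduct.lid K (A ⊗[K] B)).toLinearMap
    ∘ₗ TensorProduct.map (TensorProduct.lift e) LinearMap.id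
    ∘ₗ (TensorProduct.tensorTensorTensorComm K X A Y B).toLinearMap
    ∘ₗ TensorProduct.map (TensorProduct.comm K A X).toLinearMap LinearMap.id

lemma midContract_tmul (e : X →ₗ[K] Y →ₗ[K] K) (a : A) (x : X) (y : Y) (b : B) :
    midContract e ((a ⊗ₜ[K] x) ⊗ₜ[K] (y ⊗ₜ[K] b)) = e x y • (a ⊗ₜ[K] b) := by
  simp [midContract, TensorProduct.tensorTensorTensorComm_tmul]

lemma midContract_mem_left {P : Submodule K A} (e : X →ₗ[K] Y →ₗ[K] K)
    {a : A ⊗[K] X} (ha : a ∈ subTensor K P (⊤ : Submodule K X)) (b : Y ⊗[K] B) :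
    midContract e (a ⊗ₜ[K] b) ∈ subTensor K P (⊤ : Submodule K B) := by
  induction b using TensorProduct.induction_on with
  | zero => rw [TensorProduct.tmul_zero, map_zero]; exact zero_mem _
  | tmul s y =>
    refine subTensor_apply_mem
      ((midContract e) ∘ₗ ((TensorProduct.mk K _ _).flip (s ⊗ₜ[K] y))) ?_ a ha
    intro p hp x _
    simp only [LinearMap.comp_apply, LinearMap.flip_apply, TensorProduct.mk_apply,
      midContract_tmul]
    exact Submodule.smul_mem _ _ (tmul_mem_subTensor hp Submodule.mem_top)
  | add b₁ b₂ h₁ h₂ =>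
    rw [TensorProduct.tmul_add, map_add]; exact add_mem h₁ h₂

lemma midContract_mem_right {Q : Submodule K B} (e : X →ₗ[K] Y →ₗ[K] K)
    (a : A ⊗[K] X) {b : Y ⊗[K] B} (hb : b ∈ subTensor K (⊤ : Submodule K Y) Q) :
    midContract e (a ⊗ₜ[K] b) ∈ subTensor K (⊤ : Submodule K A) Q := by
  induction a using TensorProduct.induction_on with
  | zero => rw [TensorProduct.zero_tmul, map_zero]; exact zero_mem _
  | tmul r x =>
    refine subTensor_apply_mem
      ((midContract e) ∘ₗ (TensorProduct.mk K _ _ (r ⊗ₜ[K] x))) ?_ b hb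
    intro s _ y hy
    simp only [LinearMap.comp_apply, TensorProduct.mk_apply, midContract_tmul]
    exact Submodule.smul_mem _ _ (tmul_mem_subTensor Submodule.mem_top hy)
  | add a₁ a₂ h₁ h₂ =>
    rw [TensorProduct.add_tmul, map_add]; exact add_mem h₁ h₂

lemma midContract_eq_zero {RX : Submodule K X} {RY : Submodule K Y} (e : X →ₗ[K] Y →ₗ[K] K)
    (he : ∀ x ∈ RX, ∀ s ∈ RY, e x s = 0)
    {a : A ⊗[K] X} (ha : a ∈ subTensor K (⊤ : Submodule K A) RX)
    {b : Y ⊗[K] B} (hb : b ∈ subTensor K RY (⊤ : Submodule K B)) :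
    midContract e (a ⊗ₜ[K] b) = 0 := by
  have h : midContract e (a ⊗ₜ[K] b) ∈ (⊥ : Submodule K (A ⊗[K] B)) := by
    refine subTensor_apply_mem
      ((midContract e) ∘ₗ ((TensorProduct.mk K _ _).flip b)) ?_ a ha
    intro r _ x hx
    simp only [LinearMap.comp_apply, LinearMap.flip_apply, TensorProduct.mk_apply]
    refine subTensor_apply_mem
      ((midContract e) ∘ₗ (TensorProduct.mk K _ _ (r ⊗ₜ[K] x))) ?_ b hb
    intro s hs y _
    simp [midContract_tmul, he x hx s hs]
  simpa using h

end Aux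

lemma key_eq (K : Type) [Field K] (U V W : Type)
    [AddCommGroup U] [AddCommGroup V] [AddCommGroup W]
    [Module K U] [Module K V] [Module K W]
    (μ : ((Dual K U ⊗[K] V) ⊗[K] (Dual K V ⊗[K] W)) →ₗ[K] (Dual K U ⊗[K] W))
    (hμ : ∀ (ξ : Dual K U) (v : V) (η : Dual K V) (w : W),
      μ ((ξ ⊗ₜ[K] v) ⊗ₜ[K] (η ⊗ₜ[K] w)) = η v • (ξ ⊗ₜ[K] w)) :
    (TensorProduct.map μ μ)
      ∘ₗ (TensorProduct.tensorTensorTensorComm K (Dual K U ⊗[K] V) (Dual K U ⊗[K] V)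
            (Dual K V ⊗[K] W) (Dual K V ⊗[K] W)).toLinearMap
      ∘ₗ (TensorProduct.map
            (TensorProduct.tensorTensorTensorComm K (Dual K U) (Dual K U) V V).toLinearMap
            (TensorProduct.tensorTensorTensorComm K (Dual K V) (Dual K V) W W).toLinearMap)
    = (TensorProduct.tensorTensorTensorComm K (Dual K U) (Dual K U) W W).toLinearMap
      ∘ₗ midContract ((TensorProduct.dualDistrib K V V).flip) := by
  ext ξ ξ' v v' η η' w w'
  simp only [LinearMap.comp_apply, TensorProduct.map_tmul, LinearEquiv.coe_coe,
    TensorProduct.tensorTensorTensorComm_tmul, hμ, midContract_tmul,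
    LinearMap.flip_apply, TensorProduct.dualDistrib_apply,
    TensorProduct.AlgebraTensorModule.curry_apply, TensorProduct.curry_apply,
    LinearMap.coe_restrictScalars, map_smul, tmul_smul, smul_smul]
  rw [← TensorProduct.smul_tmul', smul_smul, mul_comm (η' v')]

set_option synthInstance.maxHeartbeats 1000000
set_option maxHeartbeats 1000000

/-- The composition law `μ : (U* ⊗ V) ⊗ (V* ⊗ W) → U* ⊗ W` of the QA-enrichment is a
morphism of quadratic data from the black product of the white products
`(U*,R_U^⊥) ∘ (V,R_V)` and `(V*,R_V^⊥) ∘ (W,R_W)` to `(U*,R_U^⊥) ∘ (W,R_W)`. -/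
theorem composition_isQuadMor (K : Type) [Field K]
    (U V W : Type) [AddCommGroup U] [AddCommGroup V] [AddCommGroup W] [Module K U] [Module K V] [Module K W] [FiniteDimensional K U] [FiniteDimensional K V] [FiniteDimensional K W]
    (RU : Submodule K (U ⊗[K] U)) (RV : Submodule K (V ⊗[K] V)) (RW : Submodule K (W ⊗[K] W))
    (μ : ((Module.Dual K U ⊗[K] V) ⊗[K] (Module.Dual K V ⊗[K] W)) →ₗ[K]
      (Module.Dual K U ⊗[K] W))
    (hμ : ∀ (ξ : Module.Dual K U) (v : V) (η : Module.Dual K V) (w : W),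
      μ ((ξ ⊗ₜ[K] v) ⊗ₜ[K] (η ⊗ₜ[K] w)) = η v • (ξ ⊗ₜ[K] w)) :
    IsQuadMor K
      (blackRel K (whiteRel K (annRel K RU) RV) (whiteRel K (annRel K RV) RW))
      (whiteRel K (annRel K RU) RW) μ := by
  set e : (V ⊗[K] V) →ₗ[K] (Dual K V ⊗[K] Dual K V) →ₗ[K] K :=
    (TensorProduct.dualDistrib K V V).flip with he_def
  have he : ∀ x ∈ RV, ∀ s ∈ annRel K RV, e x s = 0 := by
    intro x hx s hs
    exact (Submodule.mem_dualAnnihilator _).mp hs x hx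
  have hkey : ∀ (a : (Dual K U ⊗[K] Dual K U) ⊗[K] (V ⊗[K] V))
      (b : (Dual K V ⊗[K] Dual K V) ⊗[K] (W ⊗[K] W)),
      TensorProduct.map μ μ
        ((TensorProduct.tensorTensorTensorComm K (Dual K U ⊗[K] V) (Dual K U ⊗[K] V)
            (Dual K V ⊗[K] W) (Dual K V ⊗[K] W))
          (((TensorProduct.tensorTensorTensorComm K (Dual K U) (Dual K U) V V) a) ⊗ₜ[K]
           ((TensorProduct.tensorTensorTensorComm K (Dual K V) (Dual K V) W W) b)))
      = (TensorProduct.tensorTensorTensorComm K (Dual K U) (Dual K U) W W)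
          (midContract e (a ⊗ₜ[K] b)) := by
    intro a b
    have h := LinearMap.congr_fun (key_eq K U V W μ hμ) (a ⊗ₜ[K] b)
    simpa using h
  intro z hz
  obtain ⟨z₁, hz₁, rfl⟩ := hz
  obtain ⟨z₂, hz₂, rfl⟩ := hz₁
  refine subTensor_apply_mem
    ((TensorProduct.map μ μ) ∘ₗ (TensorProduct.tensorTensorTensorComm K
      (Dual K U ⊗[K] V) (Dual K U ⊗[K] V) (Dual K V ⊗[K] W) (Dual K V ⊗[K] W)).toLinearMap)
    ?_ z₂ hz₂
  intro t₁ ht₁ t₂ ht₂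
  obtain ⟨a, ha, rfl⟩ := ht₁
  obtain ⟨b, hb, rfl⟩ := ht₂
  rw [SetLike.mem_coe, Submodule.mem_sup] at ha hb
  obtain ⟨a₁, ha₁, a₂, ha₂, rfl⟩ := ha
  obtain ⟨b₁, hb₁, b₂, hb₂, rfl⟩ := hb
  simp only [LinearMap.comp_apply, LinearEquiv.coe_coe, map_add,
    TensorProduct.add_tmul, TensorProduct.tmul_add]
  have mem_white : ∀ (c : (Dual K U ⊗[K] Dual K U) ⊗[K] (W ⊗[K] W)),
      c ∈ subTensor K (annRel K RU) (⊤ : Submodule K (W ⊗[K] W)) ⊔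
          subTensor K (⊤ : Submodule K (Dual K U ⊗[K] Dual K U)) RW →
      (TensorProduct.tensorTensorTensorComm K (Dual K U) (Dual K U) W W) c ∈
        whiteRel K (annRel K RU) RW := fun c hc => Submodule.mem_map_of_mem hc
  refine add_mem (add_mem ?_ ?_) (add_mem ?_ ?_)
  · rw [hkey]
    exact mem_white _ (Submodule.mem_sup_left (midContract_mem_left e ha₁ b₁))
  · rw [hkey, midContract_eq_zero e he ha₂ hb₁, map_zero]
    exact zero_mem _
  · rw [hkey]
    exact mem_white _ (Submodule.mem_sup_left (midContract_mem_left e ha₁ b₂))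
  · rw [hkey]
    exact mem_white _ (Submodule.mem_sup_right (midContract_mem_right e a₂ hb₂))

end
end

section
/- Let K be a field, let V and W be finite-dimensional K-vector spaces, and let R ⊆ V ⊗ V and S ⊆ W ⊗ W be subspaces. Under the canonical isomorphism ((V ⊗ W) ⊗ (V ⊗ W))* ≅ (V* ⊗ W*) ⊗ (V* ⊗ W*) induced by the canonical isomorphism (V ⊗ W)* ≅ V* ⊗ W*, the annihilator of the subspace S₍₂₃₎(R ⊗ S) ⊆ (V ⊗ W) ⊗ (V ⊗ W) corresponds to the subspace S₍₂₃₎(R^⊥ ⊗ (W* ⊗ W*) + (V* ⊗ V*) ⊗ S^⊥) ⊆ (V* ⊗ W*) ⊗ (V* ⊗ W*). In other words, ((V,R) • (W,S))^! = (V,R)^! ∘ (W,S)^!: the duality functor interchanges the black and white products of quadratic data. -/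
open TensorProduct Module

noncomputable section

section Helpers

open LinearMap

lemma subTensor_map (K : Type) [Field K] {A B A' B' : Type} [AddCommMonoid A] [AddCommMonoid B]
    [AddCommMonoid A'] [AddCommMonoid B'] [Module K A] [Module K B] [Module K A'] [Module K B']
    (f : A →ₗ[K] A') (g : B →ₗ[K] B') (R : Submodule K A) (S : Submodule K B) :
    Submodule.map (TensorProduct.map f g) (subTensor K R S)
      = subTensor K (R.map f) (S.map g) := by
  show Submodule.map _ (LinearMap.range (mapIncl R S)) = LinearMap.range (mapIncl _ _)
  rw [range_mapIncl, range_mapIncl, Submodule.map₂_eq_span_image2, Submodule.map₂_eq_span_image2,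
    Submodule.map_span]
  congr 1
  rw [Set.image_image2]
  simp only [TensorProduct.mk_apply, map_tmul, Submodule.map_coe, Set.image2_image_left, Set.image2_image_right]

lemma dualDistrib_naturality (K : Type) [Field K] {A B A' B' : Type} [AddCommMonoid A] [AddCommMonoid B]
    [AddCommMonoid A'] [AddCommMonoid B'] [Module K A] [Module K B] [Module K A'] [Module K B']
    (f : A' →ₗ[K] A) (g : B' →ₗ[K] B) :
    (TensorProduct.map f g).dualMap ∘ₗ TensorProduct.dualDistrib K A B
      = TensorProduct.dualDistrib K A' B' ∘ₗ TensorProduct.map f.dualMap g.dualMap := by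
  apply TensorProduct.ext'
  intro φ ψ
  apply TensorProduct.ext'
  intro x y
  simp [dualDistrib_apply]

lemma subTensor_top_right (K : Type) [Field K] {A B : Type} [AddCommGroup A] [AddCommGroup B] [Module K A]
    [Module K B] (R : Submodule K A) :
    subTensor K R (⊤ : Submodule K B) = LinearMap.range (rTensor B R.subtype) := by
  show LinearMap.range (TensorProduct.map R.subtype (⊤ : Submodule K B).subtype) = _
  have h : TensorProduct.map R.subtype (⊤ : Submodule K B).subtype
      = (rTensor B R.subtype) ∘ₗ lTensor (↥R) (⊤ : Submodule K B).subtype := by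
    rw [rTensor_comp_lTensor]
  rw [h, range_comp, range_eq_top.mpr (lTensor_surjective (↥R)
    (fun b => ⟨⟨b, trivial⟩, rfl⟩)), Submodule.map_top]

lemma subTensor_top_left (K : Type) [Field K] {A B : Type} [AddCommGroup A] [AddCommGroup B] [Module K A]
    [Module K B] (S : Submodule K B) :
    subTensor K (⊤ : Submodule K A) S = LinearMap.range (lTensor A S.subtype) := by
  show LinearMap.range (TensorProduct.map (⊤ : Submodule K A).subtype S.subtype) = _
  have h : TensorProduct.map (⊤ : Submodule K A).subtype S.subtype
      = (lTensor A S.subtype) ∘ₗ rTensor (↥S) (⊤ : Submodule K A).subtype := by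
    rw [lTensor_comp_rTensor]
  rw [h, range_comp, range_eq_top.mpr (rTensor_surjective (↥S)
    (fun b => ⟨⟨b, trivial⟩, rfl⟩)), Submodule.map_top]

set_option maxHeartbeats 1000000 in
lemma comap_dualDistrib_ann (K : Type) [Field K] {A B : Type} [AddCommGroup A] [AddCommGroup B]
    [Module K A] [Module K B] [FiniteDimensional K A] [FiniteDimensional K B]
    (R : Submodule K A) (S : Submodule K B) :
    Submodule.comap (TensorProduct.dualDistrib K A B) (subTensor K R S).dualAnnihilator
      = subTensor K R.dualAnnihilator ⊤ ⊔ subTensor K ⊤ S.dualAnnihilator := by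
  have h1 : (subTensor K R S).dualAnnihilator
      = LinearMap.ker (TensorProduct.map R.subtype S.subtype).dualMap := by
    rw [ker_dualMap_eq_dualAnnihilator_range]; rfl
  have hinj : Function.Injective (TensorProduct.dualDistrib K (↥R) (↥S)) := by
    have h := TensorProduct.dualDistrib_dualDistribInvOfBasis_right_inverse
      (Module.Free.chooseBasis K (↥R)) (Module.Free.chooseBasis K (↥S))
    intro x y hxy
    have hx := LinearMap.congr_fun h x
    have hy := LinearMap.congr_fun h y
    simp only [LinearMap.coe_comp, Function.comp_apply, LinearMap.id_coe, id_eq] at hx hy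
    rw [← hx, ← hy, hxy]
  rw [h1, ← ker_comp, dualDistrib_naturality, ker_comp, LinearMap.ker_eq_bot_of_injective hinj,
    Submodule.comap_bot]
  have hkR : LinearMap.ker R.subtype.dualMap = R.dualAnnihilator := by
    rw [ker_dualMap_eq_dualAnnihilator_range, Submodule.range_subtype]
  have hkS : LinearMap.ker S.subtype.dualMap = S.dualAnnihilator := by
    rw [ker_dualMap_eq_dualAnnihilator_range, Submodule.range_subtype]
  have exR : Function.Exact R.dualAnnihilator.subtype R.subtype.dualMap :=
    LinearMap.exact_iff.mpr (by rw [hkR, Submodule.range_subtype])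
  have exS : Function.Exact S.dualAnnihilator.subtype S.subtype.dualMap :=
    LinearMap.exact_iff.mpr (by rw [hkS, Submodule.range_subtype])
  have key := @TensorProduct.map_ker K ↥(R.dualAnnihilator) (Dual K A) (Dual K ↥R)
    _ _ _ _ _ _ _ R.dualAnnihilator.subtype R.subtype.dualMap exR
    (LinearMap.dualMap_surjective_of_injective (f := R.subtype) R.injective_subtype)
    ↥(S.dualAnnihilator) (Dual K B) (Dual K ↥S) _ _ _ _ _ _
    S.dualAnnihilator.subtype S.subtype.dualMap exS
    (LinearMap.dualMap_surjective_of_injective (f := S.subtype) S.injective_subtype)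
  rw [key]
  rw [subTensor_top_right, subTensor_top_left, sup_comm]


lemma dualAnnihilator_map_equiv {K : Type} [Field K] {M N : Type} [AddCommGroup M] [AddCommGroup N]
    [Module K M] [Module K N] (e : M ≃ₗ[K] N) (U : Submodule K M) :
    (U.map e.toLinearMap).dualAnnihilator
      = Submodule.comap e.toLinearMap.dualMap U.dualAnnihilator := by
  ext φ
  simp only [Submodule.mem_dualAnnihilator, Submodule.mem_comap, Submodule.mem_map,
    LinearMap.dualMap_apply, LinearEquiv.coe_coe, forall_exists_index, and_imp]
  constructor
  · intro hφ u hu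
    exact hφ (e u) u hu rfl
  · rintro hφ x u hu rfl
    exact hφ u hu

lemma big_nat (K : Type) [Field K] (V W : Type) [AddCommGroup V] [AddCommGroup W]
    [Module K V] [Module K W] :
    (tensorTensorTensorComm K V V W W).toLinearMap.dualMap
        ∘ₗ TensorProduct.dualDistrib K (V ⊗[K] W) (V ⊗[K] W)
        ∘ₗ TensorProduct.map (TensorProduct.dualDistrib K V W) (TensorProduct.dualDistrib K V W)
      = TensorProduct.dualDistrib K (V ⊗[K] V) (W ⊗[K] W)
        ∘ₗ TensorProduct.map (TensorProduct.dualDistrib K V V) (TensorProduct.dualDistrib K W W)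
        ∘ₗ (tensorTensorTensorComm K (Dual K V) (Dual K V)
            (Dual K W) (Dual K W)).symm.toLinearMap := by
  apply TensorProduct.ext_fourfold'
  intro f g h k
  apply TensorProduct.ext_fourfold'
  intro v v' w w'
  simp [tensorTensorTensorComm_symm, TensorProduct.dualDistrib_apply]
  ring

lemma comap_toLinearMap_eq_map_symm {K : Type} [Field K] {M N : Type} [AddCommMonoid M]
    [AddCommMonoid N] [Module K M] [Module K N] (e : M ≃ₗ[K] N) (U : Submodule K N) :
    Submodule.comap e.toLinearMap U = Submodule.map e.symm.toLinearMap U := by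
  ext x
  simp only [Submodule.mem_comap, Submodule.mem_map, LinearEquiv.coe_coe]
  constructor
  · intro h
    exact ⟨e x, h, e.symm_apply_apply x⟩
  · rintro ⟨y, hy, rfl⟩
    simpa using hy

end Helpers

/-- `((V,R) • (W,S))^! = (V,R)^! ∘ (W,S)^!`: under the canonical isomorphism
`(V ⊗ W)* ≅ V* ⊗ W*`, the annihilator of the black product relation `S₍₂₃₎(R ⊗ S)`
corresponds to the white product relation `S₍₂₃₎(R^⊥ ⊗ (W* ⊗ W*) + (V* ⊗ V*) ⊗ S^⊥)`. -/
theorem black_dual_eq_white_of_duals (K : Type) [Field K]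
    (V W : Type) [AddCommGroup V] [AddCommGroup W] [Module K V] [Module K W] [FiniteDimensional K V] [FiniteDimensional K W]
    (R : Submodule K (V ⊗[K] V)) (S : Submodule K (W ⊗[K] W)) :
    Submodule.comap
        (TensorProduct.map (TensorProduct.dualDistribEquiv K V W).toLinearMap
          (TensorProduct.dualDistribEquiv K V W).toLinearMap)
        (annRel K (blackRel K R S))
      = whiteRel K (annRel K R) (annRel K S) := by
  have hD : (TensorProduct.dualDistribEquiv K V W).toLinearMap
      = TensorProduct.dualDistrib K V W := rfl
  have hmap : TensorProduct.map (TensorProduct.dualDistrib K V V)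
        (TensorProduct.dualDistrib K W W)
      = (TensorProduct.congr (TensorProduct.dualDistribEquiv K V V)
          (TensorProduct.dualDistribEquiv K W W)).toLinearMap := rfl
  have hsymm : (TensorProduct.congr (TensorProduct.dualDistribEquiv K V V)
        (TensorProduct.dualDistribEquiv K W W)).symm.toLinearMap
      = TensorProduct.map (TensorProduct.dualDistribEquiv K V V).symm.toLinearMap
          (TensorProduct.dualDistribEquiv K W W).symm.toLinearMap := rfl
  have hannR : annRel K R
      = Submodule.map (TensorProduct.dualDistribEquiv K V V).symm.toLinearMap
          R.dualAnnihilator := by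
    rw [annRel]
    exact comap_toLinearMap_eq_map_symm (TensorProduct.dualDistribEquiv K V V) R.dualAnnihilator
  have hannS : annRel K S
      = Submodule.map (TensorProduct.dualDistribEquiv K W W).symm.toLinearMap
          S.dualAnnihilator := by
    rw [annRel]
    exact comap_toLinearMap_eq_map_symm (TensorProduct.dualDistribEquiv K W W) S.dualAnnihilator
  unfold annRel blackRel whiteRel
  rw [hD, dualAnnihilator_map_equiv, ← Submodule.comap_comp, ← Submodule.comap_comp,
    big_nat, Submodule.comap_comp, Submodule.comap_comp, comap_dualDistrib_ann,
    hmap, comap_toLinearMap_eq_map_symm, comap_toLinearMap_eq_map_symm, hsymm,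
    LinearEquiv.symm_symm]
  simp only [Submodule.map_sup]
  rw [subTensor_map, subTensor_map, ← hannR, ← hannS]
  simp only [Submodule.map_top, LinearEquiv.range]
  simp only [annRel]

end
end

section
/- Let K be a field and let f : (V, R) → (V', R') and g : (W, S) → (W', S') be morphisms of quadratic data over K. Then the linear map f ⊗ g : V ⊗ W → V' ⊗ W' is a morphism of quadratic data from the white product (V ⊗ W, S₍₂₃₎(R ⊗ (W ⊗ W) + (V ⊗ V) ⊗ S)) to the white product (V' ⊗ W', S₍₂₃₎(R' ⊗ (W' ⊗ W') + (V' ⊗ V') ⊗ S')); that is, ((f ⊗ g) ⊗ (f ⊗ g))(S₍₂₃₎(R ⊗ (W ⊗ W) + (V ⊗ V) ⊗ S)) ⊆ S₍₂₃₎(R' ⊗ (W' ⊗ W') + (V' ⊗ V') ⊗ S'). (Hence the white product is a bifunctor on the category of quadratic data.) -/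
open TensorProduct Module

noncomputable section

lemma tmul_mem_subTensor_s8 (K : Type) [Field K] {A B : Type} [AddCommMonoid A] [AddCommMonoid B]
    [Module K A] [Module K B] {R : Submodule K A} {S : Submodule K B}
    {a : A} {b : B} (ha : a ∈ R) (hb : b ∈ S) : a ⊗ₜ[K] b ∈ subTensor K R S :=
  ⟨(⟨a, ha⟩ : R) ⊗ₜ (⟨b, hb⟩ : S), rfl⟩

lemma subTensor_map_le (K : Type) [Field K] {A B A' B' : Type}
    [AddCommMonoid A] [AddCommMonoid B] [AddCommMonoid A'] [AddCommMonoid B']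
    [Module K A] [Module K B] [Module K A'] [Module K B']
    {R : Submodule K A} {S : Submodule K B} {R' : Submodule K A'} {S' : Submodule K B'}
    {F : A →ₗ[K] A'} {G : B →ₗ[K] B'}
    (hF : Submodule.map F R ≤ R') (hG : Submodule.map G S ≤ S') :
    Submodule.map (TensorProduct.map F G) (subTensor K R S) ≤ subTensor K R' S' := by
  rintro _ ⟨x, ⟨y, rfl⟩, rfl⟩
  rw [← LinearMap.comp_apply, ← TensorProduct.map_comp]
  induction y using TensorProduct.induction_on with
  | zero => simp
  | tmul r s =>
    simp only [TensorProduct.map_tmul, LinearMap.comp_apply]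
    exact tmul_mem_subTensor_s8 K (hF ⟨r, r.2, rfl⟩) (hG ⟨s, s.2, rfl⟩)
  | add x y hx hy => rw [map_add]; exact add_mem hx hy

/-- The white product is a bifunctor: `f ⊗ g` is a morphism of quadratic data between
the white products whenever `f` and `g` are morphisms of quadratic data. -/
theorem whiteRel_map (K : Type) [Field K]
    (V V' W W' : Type) [AddCommGroup V] [AddCommGroup V'] [AddCommGroup W] [AddCommGroup W'] [Module K V] [Module K V'] [Module K W] [Module K W'] [FiniteDimensional K V] [FiniteDimensional K V'] [FiniteDimensional K W] [FiniteDimensional K W']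
    (R : Submodule K (V ⊗[K] V)) (R' : Submodule K (V' ⊗[K] V'))
    (S : Submodule K (W ⊗[K] W)) (S' : Submodule K (W' ⊗[K] W'))
    (f : V →ₗ[K] V') (g : W →ₗ[K] W')
    (hf : IsQuadMor K R R' f) (hg : IsQuadMor K S S' g) :
    IsQuadMor K (whiteRel K R S) (whiteRel K R' S') (TensorProduct.map f g) := by
  have hnat : (TensorProduct.map (TensorProduct.map f g) (TensorProduct.map f g)).comp
      (TensorProduct.tensorTensorTensorComm K V V W W).toLinearMap
      = (TensorProduct.tensorTensorTensorComm K V' V' W' W').toLinearMap.comp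
        (TensorProduct.map (TensorProduct.map f f) (TensorProduct.map g g)) := by
    ext; simp
  unfold IsQuadMor whiteRel
  rw [← Submodule.map_comp, hnat, Submodule.map_comp]
  refine Submodule.map_mono ?_
  rw [Submodule.map_sup]
  refine sup_le_sup ?_ ?_
  · exact subTensor_map_le K hf le_top
  · exact subTensor_map_le K le_top hg

end
end
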